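/- If there exists an orthogonal array OA_λ(k,n) with k ≥ 2, n ≥ 2 and λ ≥ 1 that contains a row repeated m times, then k + λn² − m ≥ kn. -/
import Mathlib

open Finset

set_option maxHeartbeats 1000000

lemma oa_aux (k n lam : ℕ) (hk : 2 ≤ k) (hn : 2 ≤ n) (hlam : 1 ≤ lam)
    (A : Fin (lam * n ^ 2) → Fin k → Fin n)
    (hOA : ∀ j j' : Fin k, j ≠ j' → ∀ x y : Fin n,
      (Finset.univ.filter (fun r => A r j = x ∧ A r j' = y)).card = lam)
    (S : Finset (Fin (lam * n ^ 2))) (hS : S.Nonempty)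
    (hSrep : ∀ r ∈ S, ∀ r' ∈ S, A r = A r') :
    k * (n - 1) + S.card ≤ lam * n ^ 2 := by
  classical
  obtain ⟨r0, hr0⟩ := hS
  haveI : NeZero n := ⟨by omega⟩
  -- single-column counts
  have hcol : ∀ (j : Fin k) (x : Fin n),
      (Finset.univ.filter (fun r => A r j = x)).card = lam * n := by
    intro j x
    obtain ⟨j', hj'⟩ := Fintype.exists_ne_of_one_lt_card (by simp; omega) j
    rw [card_eq_sum_card_fiberwise (f := fun r => A r j') (t := Finset.univ)
      (fun _ _ => mem_univ _)]
    simp only [filter_filter]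
    rw [Finset.sum_congr rfl (fun y _ => hOA j j' (Ne.symm hj') x y)]
    simp [mul_comm]
  -- symbols distinct from the repeated row, injectively parametrized
  set e : Fin (n-1) → Fin n := fun i => ⟨i.val + 1, by omega⟩ with he
  have heinj : Function.Injective e := by
    intro a b hab
    simp only [he, Fin.mk.injEq] at hab
    exact Fin.ext (by omega)
  have hene : ∀ i, e i ≠ 0 := by
    intro i h
    simp only [he] at h
    have := congrArg Fin.val h
    simp at this
  set ξ : Fin k → Fin (n-1) → Fin n := fun j i => Equiv.swap 0 (A r0 j) (e i) with hξ
  have hξne : ∀ j i, ξ j i ≠ A r0 j := by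
    intro j i h
    have h0 : Equiv.swap 0 (A r0 j) (0 : Fin n) = A r0 j := Equiv.swap_apply_left _ _
    have := (Equiv.swap 0 (A r0 j)).injective (h.trans h0.symm)
    exact hene i this
  have hξinj : ∀ j, Function.Injective (ξ j) := by
    intro j a b hab
    exact heinj ((Equiv.swap 0 (A r0 j)).injective hab)
  -- the vectors
  set v : Fin k × Fin (n-1) → Fin (lam * n ^ 2) → ℚ :=
    fun p r => if A r p.1 = ξ p.1 p.2 then 1 else 0 with hv
  set w : (Fin k × Fin (n-1)) ⊕ {r // r ∈ S} → Fin (lam * n ^ 2) → ℚ :=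
    Sum.elim v (fun s r => if r = s.val then 1 else 0) with hw
  have hLI : LinearIndependent ℚ w := by
    rw [Fintype.linearIndependent_iff]
    intro g hg
    -- coefficients on the S-part vanish
    have hzero : ∀ s : {r // r ∈ S}, g (Sum.inr s) = 0 := by
      intro s
      have h1 : (∑ a, g a • w a) s.val = 0 := by rw [hg]; rfl
      rw [Finset.sum_apply] at h1
      rw [Fintype.sum_sum_type] at h1
      have hAs : A s.val = A r0 := hSrep s.val s.2 r0 hr0
      have hfirst : ∀ p : Fin k × Fin (n-1), (g (Sum.inl p) • w (Sum.inl p)) s.val = 0 := by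
        intro p
        simp only [hw, Sum.elim_inl, Pi.smul_apply, smul_eq_mul, hv, hAs]
        rw [if_neg (hξne p.1 p.2).symm, mul_zero]
      rw [Finset.sum_congr rfl (fun p _ => hfirst p)] at h1
      simp only [Finset.sum_const_zero, zero_add] at h1
      have hsecond : ∀ t : {r // r ∈ S}, (g (Sum.inr t) • w (Sum.inr t)) s.val
          = if t = s then g (Sum.inr t) else 0 := by
        intro t
        simp only [hw, Sum.elim_inr, Pi.smul_apply, smul_eq_mul]
        by_cases h : t = s
        · simp [h]
        · rw [if_neg (fun hh => h (Subtype.ext hh.symm)), if_neg h, mul_zero]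
      rw [Finset.sum_congr rfl (fun t _ => hsecond t)] at h1
      rw [Finset.sum_ite_eq' Finset.univ s (fun t => g (Sum.inr t))] at h1
      simpa using h1
    set c : Fin k × Fin (n-1) → ℚ := fun p => g (Sum.inl p) with hc
    have hfun : ∀ r, (∑ p : Fin k × Fin (n-1), c p * v p r) = 0 := by
      intro r
      have h1 : (∑ a, g a • w a) r = 0 := by rw [hg]; rfl
      rw [Finset.sum_apply, Fintype.sum_sum_type] at h1
      have h2 : ∀ t : {r // r ∈ S}, (g (Sum.inr t) • w (Sum.inr t)) r = 0 := by
        intro t; rw [hzero t, zero_smul]; rfl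
      rw [Finset.sum_congr rfl (fun t _ => h2 t)] at h1
      simp only [Finset.sum_const_zero, add_zero] at h1
      simpa [hw, hc, smul_eq_mul] using h1
    -- master equations
    set D : Fin k → ℚ := fun j => ∑ i, c (j, i) with hD
    set C : ℚ := ∑ p : Fin k × Fin (n-1), c p with hC
    have hEq : ∀ q : Fin k × Fin (n-1),
        C * lam + c q * ((lam : ℚ) * n) - D q.1 * lam = 0 := by
      rintro ⟨j', i'⟩
      have h0 : (∑ r, (∑ p : Fin k × Fin (n-1), c p * v p r) * v (j', i') r) = 0 := by
        apply Finset.sum_eq_zero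
        intro r _
        rw [hfun r, zero_mul]
      have hvv : ∀ (j : Fin k) (i : Fin (n-1)), (∑ r, v (j, i) r * v (j', i') r)
          = (if j = j' then (if i = i' then (lam : ℚ) * n else 0) else (lam : ℚ)) := by
        intro j i
        have hb : (∑ r, v (j, i) r * v (j', i') r)
            = ((Finset.univ.filter (fun r => A r j = ξ j i ∧ A r j' = ξ j' i')).card : ℚ) := by
          rw [← Finset.sum_boole]
          apply Finset.sum_congr rfl
          intro r _
          by_cases hP : A r j = ξ j i <;> by_cases hQ : A r j' = ξ j' i' <;> simp [hv, hP, hQ]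
        rw [hb]
        by_cases h1 : j = j'
        · subst h1
          by_cases h2 : i = i'
          · subst h2
            rw [if_pos rfl, if_pos rfl]
            simp only [and_self]
            rw [hcol j (ξ j i)]
            push_cast
            ring
          · rw [if_pos rfl, if_neg h2]
            have hemp : (Finset.univ.filter
                (fun r => A r j = ξ j i ∧ A r j = ξ j i')) = ∅ := by
              rw [Finset.filter_eq_empty_iff]
              rintro r - ⟨ha, hb'⟩
              exact h2 (hξinj j (ha.symm.trans hb'))
            rw [hemp]
            simp
        · rw [if_neg h1, hOA j j' h1]
      have h1 : (∑ j : Fin k, ∑ i : Fin (n-1),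
          c (j, i) * (if j = j' then (if i = i' then (lam : ℚ) * n else 0) else (lam : ℚ))) = 0 := by
        calc (∑ j : Fin k, ∑ i : Fin (n-1),
              c (j, i) * (if j = j' then (if i = i' then (lam : ℚ) * n else 0) else (lam : ℚ)))
            = ∑ j : Fin k, ∑ i : Fin (n-1), c (j, i) * ∑ r, v (j, i) r * v (j', i') r := by
              refine Finset.sum_congr rfl fun j _ => Finset.sum_congr rfl fun i _ => ?_
              rw [hvv j i]
          _ = ∑ p : Fin k × Fin (n-1), c p * ∑ r, v p r * v (j', i') r :=
              (Fintype.sum_prod_type (fun p : Fin k × Fin (n-1) =>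
                c p * ∑ r, v p r * v (j', i') r)).symm
          _ = ∑ p : Fin k × Fin (n-1), ∑ r, c p * (v p r * v (j', i') r) := by
              refine Finset.sum_congr rfl fun p _ => ?_
              rw [Finset.mul_sum]
          _ = ∑ r, ∑ p : Fin k × Fin (n-1), c p * (v p r * v (j', i') r) := Finset.sum_comm
          _ = ∑ r, (∑ p : Fin k × Fin (n-1), c p * v p r) * v (j', i') r := by
              refine Finset.sum_congr rfl fun r _ => ?_
              rw [Finset.sum_mul]
              exact Finset.sum_congr rfl fun p _ => (mul_assoc _ _ _).symm
          _ = 0 := h0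
      have h3 : ∀ j : Fin k, (∑ i : Fin (n-1),
            c (j, i) * (if j = j' then (if i = i' then (lam : ℚ) * n else 0) else (lam : ℚ)))
          = D j * lam + (if j = j' then c (j', i') * ((lam : ℚ) * n) - D j' * lam else 0) := by
        intro j
        by_cases hj : j = j'
        · subst hj
          simp only [eq_self_iff_true, if_true]
          have hsimp : ∀ i : Fin (n-1), c (j, i) * (if i = i' then (lam : ℚ) * n else 0)
              = (if i = i' then c (j, i) * ((lam : ℚ) * n) else 0) := by
            intro i
            by_cases hi : i = i' <;> simp [hi]
          rw [Finset.sum_congr rfl (fun i _ => hsimp i),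
            Finset.sum_ite_eq' Finset.univ i' (fun i => c (j, i) * ((lam : ℚ) * n))]
          simp only [Finset.mem_univ, if_true]
          ring
        · simp only [if_neg hj, add_zero]
          rw [← Finset.sum_mul]
      rw [Finset.sum_congr rfl (fun j _ => h3 j)] at h1
      rw [Finset.sum_add_distrib, Finset.sum_ite_eq' Finset.univ j'
        (fun _ => c (j', i') * ((lam : ℚ) * n) - D j' * lam)] at h1
      simp only [Finset.mem_univ, if_true] at h1
      have h4 : (∑ j, D j * lam) = C * lam := by
        rw [← Finset.sum_mul, hC, Fintype.sum_prod_type]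
      rw [h4] at h1
      linarith [h1]
    -- solve the linear system
    have hlam0 : (lam : ℚ) ≠ 0 := by
      have : 0 < lam := hlam
      positivity
    have hk2 : (2 : ℚ) ≤ (k : ℚ) := by exact_mod_cast hk
    have hn2 : (2 : ℚ) ≤ (n : ℚ) := by exact_mod_cast hn
    have hDj : ∀ j, D j = (1 - (n : ℚ)) * C := by
      intro j
      have hs : (∑ i : Fin (n-1), (C * lam + c (j, i) * ((lam : ℚ) * n) - D j * lam)) = 0 :=
        Finset.sum_eq_zero (fun i _ => hEq (j, i))
      have hcardn : ((Fintype.card (Fin (n-1)) : ℚ)) = (n : ℚ) - 1 := by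
        rw [Fintype.card_fin]
        push_cast [Nat.cast_sub (by omega : 1 ≤ n)]
        ring
      rw [Finset.sum_sub_distrib, Finset.sum_add_distrib, Finset.sum_const,
        Finset.sum_const, ← Finset.sum_mul] at hs
      rw [Finset.card_univ, nsmul_eq_mul, nsmul_eq_mul, hcardn] at hs
      have hDjdef : (∑ i : Fin (n-1), c (j, i)) = D j := rfl
      rw [hDjdef] at hs
      -- hs : (n-1) * (C * lam) + D j * (lam * n) - (n-1) * (D j * lam) = 0
      have hkey : (lam : ℚ) * (((n : ℚ) - 1) * C + D j) = 0 := by linear_combination hs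
      have := (mul_eq_zero.mp hkey).resolve_left hlam0
      linarith
    have hC0 : C = 0 := by
      have hsum : C = (k : ℚ) * ((1 - (n : ℚ)) * C) := by
        calc C = ∑ j : Fin k, D j := by rw [hC, Fintype.sum_prod_type]
          _ = ∑ _j : Fin k, (1 - (n : ℚ)) * C := Finset.sum_congr rfl fun j _ => hDj j
          _ = (k : ℚ) * ((1 - (n : ℚ)) * C) := by
              rw [Finset.sum_const, Finset.card_univ, Fintype.card_fin, nsmul_eq_mul]
      have hfac : C * (1 - (k : ℚ) * (1 - (n : ℚ))) = 0 := by linear_combination hsum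
      have hne : (1 - (k : ℚ) * (1 - (n : ℚ))) ≠ 0 := by nlinarith
      exact (mul_eq_zero.mp hfac).resolve_right hne
    have hc0 : ∀ p : Fin k × Fin (n-1), c p = 0 := by
      intro p
      have h := hEq p
      rw [hC0, hDj p.1, hC0] at h
      have hln : ((lam : ℚ) * n) ≠ 0 := by
        have : 0 < lam := hlam
        have : 0 < n := by omega
        positivity
      have hcl : c p * ((lam : ℚ) * n) = 0 := by linear_combination h
      exact (mul_eq_zero.mp hcl).resolve_right hln
    rintro (p | s)
    · exact hc0 p
    · exact hzero s
  -- conclude by dimension count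
  have hle := hLI.fintype_card_le_finrank
  rw [Module.finrank_fin_fun] at hle
  have hcards : Fintype.card ((Fin k × Fin (n-1)) ⊕ {r // r ∈ S}) = k * (n-1) + S.card := by
    simp [Fintype.card_sum, Fintype.card_prod]
  omega

/-- Weaker bound (Remark 3.2): if an OA_λ(k,n) (k ≥ 2, n ≥ 2, λ ≥ 1) contains a row
repeated m times, then k + λn² − m ≥ kn. -/
theorem oa_repeated_row_weak_bound (k n lam m : ℕ) (hk : 2 ≤ k) (hn : 2 ≤ n) (hlam : 1 ≤ lam)
    (A : Fin (lam * n ^ 2) → Fin k → Fin n)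
    (hOA : ∀ j j' : Fin k, j ≠ j' → ∀ x y : Fin n,
      (Finset.univ.filter (fun r => A r j = x ∧ A r j' = y)).card = lam)
    (S : Finset (Fin (lam * n ^ 2))) (hScard : S.card = m)
    (hSrep : ∀ r ∈ S, ∀ r' ∈ S, A r = A r') :
    (k : ℤ) + (lam : ℤ) * n ^ 2 - m ≥ (k : ℤ) * n := by
  have key : k * (n - 1) + m ≤ lam * n ^ 2 := by
    rcases S.eq_empty_or_nonempty with hemp | hne
    · have hm : m = 0 := by rw [← hScard, hemp]; rfl
      have hpos : 0 < lam * n ^ 2 := by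
        have h1 : 0 < lam := hlam
        have h2 : 0 < n := by omega
        positivity
      set r0 : Fin (lam * n ^ 2) := ⟨0, hpos⟩
      have h := oa_aux k n lam hk hn hlam A hOA {r0} ⟨r0, Finset.mem_singleton_self r0⟩
        (by
          intro r hr r' hr'
          rw [Finset.mem_singleton] at hr hr'
          rw [hr, hr'])
      rw [Finset.card_singleton] at h
      omega
    · have h := oa_aux k n lam hk hn hlam A hOA S hne hSrep
      rw [hScard] at h
      exact h
  have h1 : (1 : ℕ) ≤ n := by omega
  zify [h1] at key
  nlinarith [key]
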